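/- Let F = {f₁,…,f_k} be an IFS of similarities on ℝ^d satisfying the open set condition, all with the same similarity factor c ∈ (0,1), and attractor K. Then the box-counting dimension of K exists and equals −log k / log c. -/

import Mathlib

open Metric Set Filter Topology MeasureTheory ENNReal NNReal

noncomputable section

/-- A map is a similarity with factor `c` if it scales all distances exactly by `c`. -/
def IsSimilarity {X : Type*} [MetricSpace X] (f : X → X) (c : ℝ) : Prop :=
  ∀ x y, dist (f x) (f y) = c * dist x y

/-- Composition `f_{ω₁} ∘ ⋯ ∘ f_{ω_n}` of the maps of an IFS along a word `ω`. -/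
def wordComp {X : Type*} {k : ℕ} (f : Fin k → X → X) {n : ℕ} (ω : Fin n → Fin k) : X → X :=
  (List.ofFn fun i => f (ω i)).foldr (· ∘ ·) id

/-- Number of elements of level `Γ_n` of the natural fractal structure (counted with
multiplicity over words) that meet `K`. -/
def levelCount {X : Type*} [MetricSpace X] {k : ℕ} (f : Fin k → X → X) (K : Set X)
    (n : ℕ) : ℕ :=
  Set.ncard {ω : Fin n → Fin k | ((wordComp f ω '' K) ∩ K).Nonempty}

/-- `δ(K, Γ_n)`: supremum of diameters of the elements of level `Γ_n` meeting `K`. -/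
def deltaLevel {X : Type*} [MetricSpace X] {k : ℕ} (f : Fin k → X → X) (K : Set X)
    (n : ℕ) : ℝ :=
  sSup {d : ℝ | ∃ ω : Fin n → Fin k, ((wordComp f ω '' K) ∩ K).Nonempty ∧
    d = Metric.diam (wordComp f ω '' K)}

/-- `N_δ(K)`: the largest number of disjoint closed balls of radius `δ` with centres in `K`. -/
def packingNum {X : Type*} [MetricSpace X] (K : Set X) (δ : ℝ) : ℕ :=
  sSup {m : ℕ | ∃ t : Finset X, t.card = m ∧ ↑t ⊆ K ∧
    (t : Set X).Pairwise fun x y => Disjoint (Metric.closedBall x δ) (Metric.closedBall y δ)}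

/-- The pre-measure `H^s_{n,3}(K)`: infimum over whole levels `m ≥ n` of the sum of the
`s`-th powers of the diameters of all elements of that level (with multiplicity). -/
def H3pre {X : Type*} [MetricSpace X] {k : ℕ} (f : Fin k → X → X) (K : Set X)
    (s : ℝ) (n : ℕ) : ℝ≥0∞ :=
  ⨅ m : {m : ℕ // n ≤ m}, ∑ ω : Fin m.1 → Fin k,
    ENNReal.ofReal (Metric.diam (wordComp f ω '' K)) ^ s

/-- `H^s_3(K)`: the (monotone) limit of `H^s_{n,3}(K)` as `n → ∞`. -/
def H3 {X : Type*} [MetricSpace X] {k : ℕ} (f : Fin k → X → X) (K : Set X) (s : ℝ) : ℝ≥0∞ :=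
  ⨆ n : ℕ, H3pre f K s n

/-- `H^s_4(K)`: limit over `n` of the infimum over finite covers of `K` by elements of
levels `≥ n` of the natural fractal structure. -/
def H4 {X : Type*} [MetricSpace X] {k : ℕ} (f : Fin k → X → X) (K : Set X) (s : ℝ) : ℝ≥0∞ :=
  ⨆ n : ℕ, ⨅ (𝒜 : Set (Set X)) (_ : 𝒜.Finite ∧
      (∀ A ∈ 𝒜, ∃ m, n ≤ m ∧ ∃ ω : Fin m → Fin k, A = wordComp f ω '' K) ∧ K ⊆ ⋃₀ 𝒜),
    ∑' A : 𝒜, ENNReal.ofReal (Metric.diam (A : Set X)) ^ s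

/-- `H^s_5(K)`: limit over `n` of the infimum over countable covers of `K` by elements of
levels `≥ n` of the natural fractal structure. -/
def H5 {X : Type*} [MetricSpace X] {k : ℕ} (f : Fin k → X → X) (K : Set X) (s : ℝ) : ℝ≥0∞ :=
  ⨆ n : ℕ, ⨅ (𝒜 : Set (Set X)) (_ : 𝒜.Countable ∧
      (∀ A ∈ 𝒜, ∃ m, n ≤ m ∧ ∃ ω : Fin m → Fin k, A = wordComp f ω '' K) ∧ K ⊆ ⋃₀ 𝒜),
    ∑' A : 𝒜, ENNReal.ofReal (Metric.diam (A : Set X)) ^ s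

/-- `H^s_6(K)`: limit as `δ → 0` of the infimum over countable covers of `K` by
fractal-structure elements of diameter at most `δ`. -/
def H6 {X : Type*} [MetricSpace X] {k : ℕ} (f : Fin k → X → X) (K : Set X) (s : ℝ) : ℝ≥0∞ :=
  ⨆ (δ : ℝ) (_ : 0 < δ), ⨅ (𝒜 : Set (Set X)) (_ : 𝒜.Countable ∧
      (∀ A ∈ 𝒜, (∃ m, ∃ ω : Fin m → Fin k, A = wordComp f ω '' K) ∧ Metric.diam A ≤ δ) ∧
      K ⊆ ⋃₀ 𝒜),
    ∑' A : 𝒜, ENNReal.ofReal (Metric.diam (A : Set X)) ^ s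

/-- The open set condition for a family of self-maps of `ℝ^d`. -/
def OSC {d k : ℕ} (f : Fin k → EuclideanSpace ℝ (Fin d) → EuclideanSpace ℝ (Fin d)) : Prop :=
  ∃ V : Set (EuclideanSpace ℝ (Fin d)), V.Nonempty ∧ IsOpen V ∧ Bornology.IsBounded V ∧
    (∀ i, f i '' V ⊆ V) ∧ Pairwise fun i j => Disjoint (f i '' V) (f j '' V)

/-! ### Auxiliary lemmas -/

section Aux

variable {k : ℕ}

lemma wordComp_zero' {Y : Type*} (f : Fin k → Y → Y) (ω : Fin 0 → Fin k) :
    wordComp f ω = id := rfl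

lemma wordComp_succ' {Y : Type*} (f : Fin k → Y → Y) {n : ℕ} (ω : Fin (n+1) → Fin k) :
    wordComp f ω = f (ω 0) ∘ wordComp f (Fin.tail ω) := by
  unfold wordComp
  rw [List.ofFn_succ]
  rfl

lemma IsSimilarity.comp' {Y : Type*} [MetricSpace Y] {g h : Y → Y} {a b : ℝ}
    (hg : IsSimilarity g a) (hh : IsSimilarity h b) : IsSimilarity (g ∘ h) (a * b) :=
  fun x y => by rw [Function.comp_apply, Function.comp_apply, hg, hh, mul_assoc]

lemma isSimilarity_wordComp {Y : Type*} [MetricSpace Y] (f : Fin k → Y → Y) {c : ℝ}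
    (hf : ∀ i, IsSimilarity (f i) c) :
    ∀ {n : ℕ} (ω : Fin n → Fin k), IsSimilarity (wordComp f ω) (c ^ n)
  | 0, ω => by
      rw [wordComp_zero']
      intro x y; simp
  | n+1, ω => by
      rw [wordComp_succ', pow_succ']
      exact (hf (ω 0)).comp' (isSimilarity_wordComp f hf (Fin.tail ω))

lemma IsSimilarity.lipschitz {Y : Type*} [MetricSpace Y] {g : Y → Y} {r : ℝ}
    (hg : IsSimilarity g r) : LipschitzWith r.toNNReal g :=
  LipschitzWith.of_dist_le_mul fun x y => by
    rw [hg x y, Real.coe_toNNReal']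
    have := dist_nonneg (x := x) (y := y)
    nlinarith [le_max_left r 0]

lemma IsSimilarity.continuous {Y : Type*} [MetricSpace Y] {g : Y → Y} {r : ℝ}
    (hg : IsSimilarity g r) : Continuous g := hg.lipschitz.continuous

lemma IsSimilarity.antilipschitz {Y : Type*} [MetricSpace Y] {g : Y → Y} {r : ℝ}
    (hr : 0 < r) (hg : IsSimilarity g r) : AntilipschitzWith r⁻¹.toNNReal g :=
  AntilipschitzWith.of_le_mul_dist fun x y => by
    rw [hg x y, Real.coe_toNNReal' r⁻¹, max_eq_left (by positivity)]
    rw [← mul_assoc, inv_mul_cancel₀ hr.ne', one_mul]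

lemma IsSimilarity.injective {Y : Type*} [MetricSpace Y] {g : Y → Y} {r : ℝ}
    (hr : 0 < r) (hg : IsSimilarity g r) : Function.Injective g :=
  (hg.antilipschitz hr).injective

lemma IsSimilarity.diam_image_le {Y : Type*} [MetricSpace Y] {g : Y → Y} {r : ℝ}
    (hr : 0 ≤ r) (hg : IsSimilarity g r) {s : Set Y} (hs : Bornology.IsBounded s) :
    Metric.diam (g '' s) ≤ r * Metric.diam s := by
  apply Metric.diam_le_of_forall_dist_le (by positivity)
  rintro _ ⟨x, hx, rfl⟩ _ ⟨y, hy, rfl⟩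
  rw [hg x y]
  exact mul_le_mul_of_nonneg_left (Metric.dist_le_diam_of_mem hs hx hy) hr

/-- Exact scaling of Hausdorff measure under a similarity. -/
lemma IsSimilarity.hausdorffMeasure_image {Y : Type*} [MetricSpace Y] [MeasurableSpace Y]
    [BorelSpace Y] {g : Y → Y} {r : ℝ} (hr : 0 < r) (hg : IsSimilarity g r) {D : ℝ}
    (hD : 0 ≤ D) (A : Set Y) :
    μH[D] (g '' A) = ENNReal.ofReal r ^ D * μH[D] A := by
  have h1 : μH[D] (g '' A) ≤ (r.toNNReal : ℝ≥0∞) ^ D * μH[D] A :=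
    hg.lipschitz.hausdorffMeasure_image_le hD A
  have h2 : μH[D] A ≤ ((r⁻¹.toNNReal : ℝ≥0∞)) ^ D * μH[D] (g '' A) :=
    (hg.antilipschitz hr).le_hausdorffMeasure_image hD A
  have hcoe : (r.toNNReal : ℝ≥0∞) = ENNReal.ofReal r := rfl
  have hcoe' : (r⁻¹.toNNReal : ℝ≥0∞) = ENNReal.ofReal r⁻¹ := rfl
  rw [hcoe] at h1; rw [hcoe'] at h2
  refine le_antisymm h1 ?_
  calc ENNReal.ofReal r ^ D * μH[D] A
      ≤ ENNReal.ofReal r ^ D * (ENNReal.ofReal r⁻¹ ^ D * μH[D] (g '' A)) := by gcongr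
    _ = (ENNReal.ofReal r * ENNReal.ofReal r⁻¹) ^ D * μH[D] (g '' A) := by
        rw [ENNReal.mul_rpow_of_nonneg _ _ hD, mul_assoc]
    _ = μH[D] (g '' A) := by
        rw [← ENNReal.ofReal_mul hr.le, mul_inv_cancel₀ hr.ne', ENNReal.ofReal_one,
          ENNReal.one_rpow, one_mul]

lemma wordComp_image_subset {Y : Type*} (f : Fin k → Y → Y) {V : Set Y}
    (hV : ∀ i, f i '' V ⊆ V) : ∀ {n : ℕ} (ω : Fin n → Fin k), wordComp f ω '' V ⊆ V
  | 0, ω => by rw [wordComp_zero']; simp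
  | n+1, ω => by
      rw [wordComp_succ', Set.image_comp]
      exact (Set.image_mono (wordComp_image_subset f hV (Fin.tail ω))).trans (hV (ω 0))

lemma wordComp_disjoint {Y : Type*} (f : Fin k → Y → Y)
    (hinj : ∀ i, Function.Injective (f i)) {V : Set Y} (hV : ∀ i, f i '' V ⊆ V)
    (hdisj : Pairwise fun i j => Disjoint (f i '' V) (f j '' V)) :
    ∀ {n : ℕ} (ω ω' : Fin n → Fin k), ω ≠ ω' →
      Disjoint (wordComp f ω '' V) (wordComp f ω' '' V)
  | 0, ω, ω', h => absurd (funext fun i => i.elim0) h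
  | n+1, ω, ω', h => by
      rw [wordComp_succ', wordComp_succ', Set.image_comp, Set.image_comp]
      rcases eq_or_ne (ω 0) (ω' 0) with h0 | h0
      · have htail : Fin.tail ω ≠ Fin.tail ω' := by
          intro hteq
          apply h
          funext i
          refine Fin.cases ?_ ?_ i
          · exact h0
          · intro j; exact congrFun hteq j
        rw [h0]
        exact Set.disjoint_image_of_injective (hinj (ω' 0))
          (wordComp_disjoint f hinj hV hdisj (Fin.tail ω) (Fin.tail ω') htail)
      · exact Disjoint.mono
          (Set.image_mono (wordComp_image_subset f hV (Fin.tail ω)))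
          (Set.image_mono (wordComp_image_subset f hV (Fin.tail ω')))
          (hdisj h0)

lemma iUnion_wordComp {Y : Type*} (f : Fin k → Y → Y) {K : Set Y}
    (hK : K = ⋃ i, f i '' K) : ∀ n : ℕ, K = ⋃ ω : Fin n → Fin k, wordComp f ω '' K
  | 0 => by
      have : Nonempty (Fin 0 → Fin k) := ⟨fun i => i.elim0⟩
      simp only [wordComp_zero', Set.image_id, Set.iUnion_const]
  | n+1 => by
      conv_lhs => rw [hK]
      have IH := iUnion_wordComp f hK n
      ext x
      simp only [Set.mem_iUnion]
      constructor
      · rintro ⟨i, y, hy, rfl⟩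
        rw [IH] at hy
        obtain ⟨ω', z, hz, rfl⟩ := Set.mem_iUnion.1 hy
        exact ⟨Fin.cons i ω', by
          rw [wordComp_succ']
          refine ⟨z, hz, ?_⟩
          simp [Fin.tail_cons]⟩
      · rintro ⟨ω, y, hy, rfl⟩
        rw [wordComp_succ'] at *
        exact ⟨ω 0, wordComp f (Fin.tail ω) y, by rw [IH]; exact Set.mem_iUnion.2 ⟨_, _, hy, rfl⟩, rfl⟩

lemma wordComp_image_subset_attractor {Y : Type*} (f : Fin k → Y → Y) {K : Set Y}
    (hK : K = ⋃ i, f i '' K) {n : ℕ} (ω : Fin n → Fin k) : wordComp f ω '' K ⊆ K := by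
  intro x hx
  rw [iUnion_wordComp f hK n]
  exact Set.mem_iUnion.2 ⟨ω, hx⟩

section Packing

variable {Y : Type*} [NormedAddCommGroup Y] [NormedSpace ℝ Y]

lemma dist_gt_of_disjoint_closedBall {x y : Y} {δ : ℝ} (hδ : 0 < δ)
    (h : Disjoint (Metric.closedBall x δ) (Metric.closedBall y δ)) : 2 * δ < dist x y := by
  by_contra hle
  push_neg at hle
  have h2 : ‖(2 : ℝ)‖⁻¹ = (2 : ℝ)⁻¹ := by norm_num
  have hx : midpoint ℝ x y ∈ Metric.closedBall x δ := by
    rw [Metric.mem_closedBall, dist_comm, dist_left_midpoint, h2]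
    linarith
  have hy : midpoint ℝ x y ∈ Metric.closedBall y δ := by
    rw [Metric.mem_closedBall, dist_midpoint_right, h2]
    linarith
  exact Set.disjoint_left.1 h hx hy

/-- If `K` is covered by finitely many sets of diameter at most `2δ`, then any `δ`-packing of
`K` has at most that many elements. -/
lemma packing_card_le {K : Set Y} {δ : ℝ} (hδ : 0 < δ) {ι : Type*} [Fintype ι]
    {C : ι → Set Y} (hcover : K ⊆ ⋃ i, C i) (hbdd : ∀ i, Bornology.IsBounded (C i))
    (hdiam : ∀ i, Metric.diam (C i) ≤ 2 * δ) {t : Finset Y} (htK : ↑t ⊆ K)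
    (hdisj : (t : Set Y).Pairwise fun x y => Disjoint (Metric.closedBall x δ)
      (Metric.closedBall y δ)) :
    t.card ≤ Fintype.card ι := by
  rcases t.eq_empty_or_nonempty with rfl | ⟨x₀, hx₀⟩
  · simp
  have hne : Nonempty ι := by
    obtain ⟨i, _⟩ := Set.mem_iUnion.1 (hcover (htK hx₀))
    exact ⟨i⟩
  classical
  set φ : Y → ι := fun x => if h : ∃ i, x ∈ C i then h.choose else Classical.arbitrary ι with hφ
  have hφmem : ∀ x ∈ t, x ∈ C (φ x) := by
    intro x hx
    have h : ∃ i, x ∈ C i := Set.mem_iUnion.1 (hcover (htK hx))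
    simp only [hφ, dif_pos h]
    exact h.choose_spec
  have hinj : (↑t : Set Y).InjOn φ := by
    intro x hx y hy hxy
    by_contra hne'
    have hlt := dist_gt_of_disjoint_closedBall hδ (hdisj hx hy hne')
    have hle : dist x y ≤ 2 * δ := by
      exact le_trans (Metric.dist_le_diam_of_mem (hbdd (φ x)) (hφmem x hx)
        (hxy ▸ hφmem y hy)) (hdiam (φ x))
    linarith
  simpa using Finset.card_le_card_of_injOn φ (fun a _ => Finset.mem_univ (φ a)) hinj

end Packing

section HausdorffBall

open Module

variable {E : Type*} [NormedAddCommGroup E] [NormedSpace ℝ E] [FiniteDimensional ℝ E]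
  [MeasurableSpace E] [BorelSpace E]

lemma hausdorff_closedBall_eq (x : E) {r : ℝ} (hr : 0 ≤ r) :
    μH[(finrank ℝ E : ℝ)] (Metric.closedBall x r) =
      ENNReal.ofReal r ^ (finrank ℝ E : ℝ) *
        μH[(finrank ℝ E : ℝ)] (Metric.ball (0 : E) 1) := by
  rw [Measure.addHaar_closedBall _ x hr, ENNReal.ofReal_pow hr, ENNReal.rpow_natCast]

lemma hausdorff_closedBall_pos (x : E) {r : ℝ} (hr : 0 < r) :
    0 < μH[(finrank ℝ E : ℝ)] (Metric.closedBall x r) :=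
  measure_closedBall_pos _ x hr

lemma hausdorff_closedBall_lt_top (x : E) (r : ℝ) :
    μH[(finrank ℝ E : ℝ)] (Metric.closedBall x r) < ⊤ :=
  (isCompact_closedBall x r).measure_lt_top

end HausdorffBall

/-- The key quantitative bounds: for small `δ`, the packing number is within constant factors
of `δ ^ (-s)` where `s = log k / (- log c)`. -/
lemma packingNum_bounds {d k : ℕ} (hk : 0 < k)
    (f : Fin k → EuclideanSpace ℝ (Fin d) → EuclideanSpace ℝ (Fin d))
    (c : ℝ) (hc : c ∈ Set.Ioo (0 : ℝ) 1)
    (hf : ∀ i, IsSimilarity (f i) c) (hosc : OSC f)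
    (K : Set (EuclideanSpace ℝ (Fin d))) (hne : K.Nonempty) (hcpt : IsCompact K)
    (hK : K = ⋃ i, f i '' K) :
    ∃ C₁ C₂ : ℝ, 0 < C₁ ∧ 0 < C₂ ∧ ∀ δ : ℝ, 0 < δ → δ < c →
      C₁ * δ ^ (-(Real.log k / (-Real.log c))) ≤ (packingNum K δ : ℝ) ∧
      (packingNum K δ : ℝ) ≤ C₂ * δ ^ (-(Real.log k / (-Real.log c))) := by
  classical
  obtain ⟨hc0, hc1⟩ := hc
  obtain ⟨V, ⟨v, hvV⟩, hVopen, hVbdd, hVmap, hVdisj⟩ := hosc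
  obtain ⟨y₀, hy₀⟩ := hne
  set s : ℝ := Real.log k / (-Real.log c) with hs_def
  have hlogc : Real.log c < 0 := Real.log_neg hc0 hc1
  have hk1 : (1 : ℝ) ≤ (k : ℝ) := by exact_mod_cast hk
  have hkpos : (0 : ℝ) < (k : ℝ) := by linarith
  have hs0 : 0 ≤ s := div_nonneg (Real.log_nonneg hk1) (by linarith)
  have hck : (c : ℝ) ^ (-s) = (k : ℝ) := by
    rw [Real.rpow_def_of_pos hc0]
    have h1 : Real.log c * (-s) = Real.log k := by
      rw [hs_def]
      field_simp
      exact mul_div_cancel_left₀ _ (ne_of_lt hlogc)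
    rw [h1, Real.exp_log hkpos]
  have hkn : ∀ n : ℕ, ((k : ℝ)) ^ n = ((c : ℝ) ^ n) ^ (-s) := by
    intro n
    rw [← hck, ← Real.rpow_natCast (c ^ (-s)) n, ← Real.rpow_mul hc0.le,
      ← Real.rpow_natCast c n, ← Real.rpow_mul hc0.le, mul_comm]
  have hsim : ∀ {n : ℕ} (ω : Fin n → Fin k), IsSimilarity (wordComp f ω) (c ^ n) :=
    fun ω => isSimilarity_wordComp f hf ω
  have hinj : ∀ i, Function.Injective (f i) := fun i => (hf i).injective hc0
  -- constant m₀ for the covering bound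
  have hDK : 0 ≤ Metric.diam K := Metric.diam_nonneg
  obtain ⟨m₀, hm₀⟩ : ∃ m₀ : ℕ, c ^ m₀ * Metric.diam K ≤ 2 * c := by
    rcases eq_or_lt_of_le hDK with hD0 | hD0
    · exact ⟨0, by rw [← hD0, mul_zero]; positivity⟩
    · obtain ⟨m₀, hm₀⟩ := exists_pow_lt_of_lt_one
        (x := 2 * c / Metric.diam K) (by positivity) hc1
      refine ⟨m₀, ?_⟩
      rw [lt_div_iff₀ hD0] at hm₀
      linarith
  -- geometric constants
  obtain ⟨ρ, hρ0, hρV⟩ : ∃ ρ > 0, Metric.closedBall v ρ ⊆ V := by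
    obtain ⟨ρ, hρ0, h⟩ := Metric.nhds_basis_closedBall.mem_iff.1 (hVopen.mem_nhds hvV)
    exact ⟨ρ, hρ0, h⟩
  obtain ⟨r₀, hr₀⟩ := (hVbdd.union hcpt.isBounded).subset_closedBall v
  set M₀ : ℝ := 2 * |r₀| + 1 with hM₀_def
  have hM₀pos : 0 < M₀ := by positivity
  have hM₀ : ∀ u ∈ V, ∀ y ∈ K, dist u y ≤ M₀ := by
    intro u hu y hy
    have h1 : dist u v ≤ r₀ := hr₀ (Set.mem_union_left _ hu)
    have h2 : dist y v ≤ r₀ := hr₀ (Set.mem_union_right _ hy)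
    have h3 : r₀ ≤ |r₀| := le_abs_self r₀
    calc dist u y ≤ dist u v + dist v y := dist_triangle u v y
      _ = dist u v + dist y v := by rw [dist_comm v y]
      _ ≤ M₀ := by rw [hM₀_def]; linarith
  set R : ℝ := M₀ / c + 2 with hR_def
  have hR0 : 0 < R := by positivity
  -- measure-theoretic constants
  set D : ℝ := (Module.finrank ℝ (EuclideanSpace ℝ (Fin d)) : ℝ) with hD_def
  have hD : 0 ≤ D := Nat.cast_nonneg _
  set ν : Measure (EuclideanSpace ℝ (Fin d)) := μH[D] with hν_def
  set νB : ℝ≥0∞ := ν (Metric.closedBall v ρ) with hνB_def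
  set ν1 : ℝ≥0∞ := ν (Metric.ball (0 : (EuclideanSpace ℝ (Fin d))) 1) with hν1_def
  have hνB_pos : 0 < νB := hausdorff_closedBall_pos v hρ0
  have hνB_top : νB < ⊤ := hausdorff_closedBall_lt_top v ρ
  have hν1_top : ν1 < ⊤ :=
    lt_of_le_of_lt (measure_mono Metric.ball_subset_closedBall)
      (hausdorff_closedBall_lt_top (0 : (EuclideanSpace ℝ (Fin d))) 1)
  set CC : ℝ≥0∞ := ENNReal.ofReal R ^ D * ν1 / νB with hCC_def
  have hCC_top : CC < ⊤ := by
    rw [hCC_def]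
    exact ENNReal.div_lt_top (ENNReal.mul_ne_top
      (ENNReal.rpow_ne_top_of_nonneg hD ENNReal.ofReal_ne_top) hν1_top.ne) hνB_pos.ne'
  set natC : ℕ := ⌊CC.toReal⌋₊ with hnatC_def
  refine ⟨c ^ s / (natC + 1), (k : ℝ) ^ m₀, by positivity, by positivity, ?_⟩
  intro δ hδ0 hδc
  -- choose the scale n
  have hex : ∃ n : ℕ, c ^ (n + 1) ≤ δ := by
    obtain ⟨n, hn⟩ := exists_pow_lt_of_lt_one hδ0 hc1
    exact ⟨n, by calc c ^ (n+1) ≤ c ^ n := pow_le_pow_of_le_one hc0.le hc1.le (by omega)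
      _ ≤ δ := hn.le⟩
  set n : ℕ := Nat.find hex with hn_def
  have h1 : c ^ (n + 1) ≤ δ := Nat.find_spec hex
  have h2 : δ < c ^ n := by
    rcases Nat.eq_zero_or_pos n with h | h
    · rw [h, pow_zero]; linarith
    · have := Nat.find_min hex (m := n - 1) (by omega)
      push_neg at this
      calc δ < c ^ (n - 1 + 1) := this
        _ = c ^ n := by congr 1; omega
  have hcn_pos : 0 < c ^ n := pow_pos hc0 n
  have h3 : c ^ n ≤ δ / c := by
    rw [le_div_iff₀ hc0]
    calc c ^ n * c = c ^ (n + 1) := by rw [pow_succ]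
      _ ≤ δ := h1
  -- the packing set
  set S : Set ℕ := {m : ℕ | ∃ t : Finset (EuclideanSpace ℝ (Fin d)), t.card = m ∧ ↑t ⊆ K ∧
    (t : Set (EuclideanSpace ℝ (Fin d))).Pairwise fun x y => Disjoint (Metric.closedBall x δ) (Metric.closedBall y δ)}
    with hS_def
  have hS0 : 0 ∈ S := ⟨∅, by simp⟩
  -- upper bound for any packing
  have hub : ∀ m ∈ S, m ≤ k ^ (n + m₀) := by
    rintro m ⟨t, rfl, htK, hdisj⟩
    have hcover : K ⊆ ⋃ ω : Fin (n + m₀) → Fin k, wordComp f ω '' K :=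
      (iUnion_wordComp f hK (n + m₀)).le
    have hbdd : ∀ ω : Fin (n + m₀) → Fin k, Bornology.IsBounded (wordComp f ω '' K) :=
      fun ω => (hcpt.image (hsim ω).continuous).isBounded
    have hdiam : ∀ ω : Fin (n + m₀) → Fin k, Metric.diam (wordComp f ω '' K) ≤ 2 * δ := by
      intro ω
      calc Metric.diam (wordComp f ω '' K) ≤ c ^ (n + m₀) * Metric.diam K :=
            (hsim ω).diam_image_le (by positivity) hcpt.isBounded
        _ = c ^ n * (c ^ m₀ * Metric.diam K) := by ring
        _ ≤ (δ / c) * (2 * c) := by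
            apply mul_le_mul h3 hm₀ (by positivity) (by positivity)
        _ = 2 * δ := by field_simp
    have := packing_card_le hδ0 hcover hbdd hdiam htK hdisj
    calc t.card ≤ Fintype.card (Fin (n + m₀) → Fin k) := this
      _ = k ^ (n + m₀) := by simp [Fintype.card_fun]
  have hBdd : BddAbove S := ⟨k ^ (n + m₀), hub⟩
  have hNmem : packingNum K δ ∈ S := Nat.sSup_mem ⟨0, hS0⟩ hBdd
  have hN1 : 1 ≤ packingNum K δ := by
    apply le_csSup hBdd
    refine ⟨{y₀}, Finset.card_singleton y₀, by simpa using hy₀, ?_⟩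
    simp
  have hNub : packingNum K δ ≤ k ^ (n + m₀) := hub _ hNmem
  obtain ⟨t, htcard, htK, htdisj⟩ := hNmem
  -- maximality: the doubled balls cover K
  have hcover2 : K ⊆ ⋃ x ∈ t, Metric.closedBall x (2 * δ) := by
    by_contra hcontra
    rw [Set.not_subset] at hcontra
    obtain ⟨y, hyK, hy⟩ := hcontra
    simp only [Set.mem_iUnion, Metric.mem_closedBall, not_exists] at hy
    have hyd : ∀ x ∈ t, 2 * δ < dist y x := by
      intro x hx
      have := hy x
      push_neg at this
      exact this hx
    have hyt : y ∉ t := by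
      intro hyt
      have := hyd y hyt
      simp at this
      linarith
    have hmem : packingNum K δ + 1 ∈ S := by
      refine ⟨insert y t, ?_, ?_, ?_⟩
      · rw [Finset.card_insert_of_notMem hyt, htcard]
      · intro z hz
        rcases Finset.mem_insert.1 (by exact_mod_cast hz) with rfl | hz'
        · exact hyK
        · exact htK hz'
      · rw [Finset.coe_insert]
        haveI : Std.Symm (fun x y : EuclideanSpace ℝ (Fin d) =>
            Disjoint (Metric.closedBall x δ) (Metric.closedBall y δ)) := ⟨fun a b h => h.symm⟩
        rw [Set.pairwise_insert_of_symm]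
        refine ⟨htdisj, ?_⟩
        intro x hx _
        apply Metric.closedBall_disjoint_closedBall
        have := hyd x hx
        linarith
    have hle := le_csSup hBdd hmem
    have hps : packingNum K δ = sSup S := rfl
    rw [← hps] at hle
    omega
  -- the map from words to packing centres
  have hpick : ∀ ω : Fin n → Fin k, ∃ x, x ∈ t ∧ dist (wordComp f ω y₀) x ≤ 2 * δ := by
    intro ω
    have hmem : wordComp f ω y₀ ∈ K :=
      wordComp_image_subset_attractor f hK ω ⟨y₀, hy₀, rfl⟩
    have := hcover2 hmem
    simp only [Set.mem_iUnion, Metric.mem_closedBall] at this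
    obtain ⟨x, hx, hd⟩ := this
    exact ⟨x, hx, hd⟩
  choose Φ hΦt hΦd using hpick
  -- fiber counting
  have hfiber : ∀ x ∈ t, (Finset.univ.filter (fun ω : Fin n → Fin k => Φ ω = x)).card ≤ natC := by
    intro x hx
    set F : Finset (Fin n → Fin k) := Finset.univ.filter (fun ω => Φ ω = x) with hF_def
    set W : (Fin n → Fin k) → Set (EuclideanSpace ℝ (Fin d)) := fun ω => wordComp f ω '' Metric.closedBall v ρ
      with hW_def
    have hWmeas : ∀ ω, MeasurableSet (W ω) :=
      fun ω => ((isCompact_closedBall v ρ).image (hsim ω).continuous).measurableSet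
    have hWdisj : (↑F : Set (Fin n → Fin k)).PairwiseDisjoint W := by
      intro ω _ ω' _ hne'
      exact (wordComp_disjoint f hinj hVmap hVdisj ω ω' hne').mono
        (Set.image_mono hρV) (Set.image_mono hρV)
    have hWsub : ∀ ω ∈ F, W ω ⊆ Metric.closedBall x (δ * R) := by
      intro ω hω
      have hΦx : Φ ω = x := (Finset.mem_filter.1 hω).2
      rintro _ ⟨u, hu, rfl⟩
      rw [Metric.mem_closedBall]
      have hd1 : dist (wordComp f ω u) (wordComp f ω y₀) = c ^ n * dist u y₀ := hsim ω u y₀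
      have hd2 : dist (wordComp f ω y₀) x ≤ 2 * δ := hΦx ▸ hΦd ω
      have hd3 : dist u y₀ ≤ M₀ := hM₀ u (hρV hu) y₀ hy₀
      calc dist (wordComp f ω u) x
          ≤ dist (wordComp f ω u) (wordComp f ω y₀) + dist (wordComp f ω y₀) x :=
            dist_triangle _ _ _
        _ ≤ c ^ n * M₀ + 2 * δ := by
            rw [hd1]
            have := mul_le_mul_of_nonneg_left hd3 hcn_pos.le
            linarith
        _ ≤ (δ / c) * M₀ + 2 * δ := by
            have := mul_le_mul_of_nonneg_right h3 hM₀pos.le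
            linarith
        _ = δ * R := by rw [hR_def]; field_simp
    have hμW : ∀ ω, ν (W ω) = ENNReal.ofReal (c ^ n) ^ D * νB := by
      intro ω
      rw [hW_def, hν_def]
      exact (hsim ω).hausdorffMeasure_image hcn_pos hD _
    have hμWlow : ∀ ω, ENNReal.ofReal δ ^ D * νB ≤ ν (W ω) := by
      intro ω
      rw [hμW ω]
      gcongr
    have hchain : (F.card : ℝ≥0∞) * (ENNReal.ofReal δ ^ D * νB) ≤
        ENNReal.ofReal δ ^ D * (ENNReal.ofReal R ^ D * ν1) := by
      calc (F.card : ℝ≥0∞) * (ENNReal.ofReal δ ^ D * νB)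
          = F.card • (ENNReal.ofReal δ ^ D * νB) := by rw [nsmul_eq_mul]
        _ ≤ ∑ ω ∈ F, ν (W ω) := Finset.card_nsmul_le_sum F _ _ (fun ω _ => hμWlow ω)
        _ = ν (⋃ ω ∈ F, W ω) := (measure_biUnion_finset hWdisj (fun ω _ => hWmeas ω)).symm
        _ ≤ ν (Metric.closedBall x (δ * R)) := by
            apply measure_mono
            exact Set.iUnion₂_subset hWsub
        _ = ENNReal.ofReal (δ * R) ^ D * ν1 := by
            rw [hν_def, hν1_def, hD_def]
            exact hausdorff_closedBall_eq x (by positivity)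
        _ = ENNReal.ofReal δ ^ D * (ENNReal.ofReal R ^ D * ν1) := by
            rw [ENNReal.ofReal_mul hδ0.le, ENNReal.mul_rpow_of_nonneg _ _ hD, mul_assoc]
    have hcancel : (F.card : ℝ≥0∞) * νB ≤ ENNReal.ofReal R ^ D * ν1 := by
      have hδD0 : (ENNReal.ofReal δ ^ D : ℝ≥0∞) ≠ 0 := by
        apply (ENNReal.rpow_pos (by simpa using hδ0) ENNReal.ofReal_ne_top).ne'
      have hδDtop : (ENNReal.ofReal δ ^ D : ℝ≥0∞) ≠ ⊤ :=
        ENNReal.rpow_ne_top_of_nonneg hD ENNReal.ofReal_ne_top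
      rw [← ENNReal.mul_le_mul_iff_right hδD0 hδDtop]
      calc ENNReal.ofReal δ ^ D * ((F.card : ℝ≥0∞) * νB)
          = (F.card : ℝ≥0∞) * (ENNReal.ofReal δ ^ D * νB) := by ring
        _ ≤ ENNReal.ofReal δ ^ D * (ENNReal.ofReal R ^ D * ν1) := hchain
    have hFC : (F.card : ℝ≥0∞) ≤ CC := by
      rw [hCC_def, ENNReal.le_div_iff_mul_le (Or.inl hνB_pos.ne') (Or.inl hνB_top.ne)]
      exact hcancel
    have : (F.card : ℝ) ≤ CC.toReal := by
      have := ENNReal.toReal_mono hCC_top.ne hFC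
      simpa using this
    exact Nat.le_floor this
  -- total count
  have hcount : k ^ n ≤ packingNum K δ * natC := by
    have h4 : (Finset.univ : Finset (Fin n → Fin k)).card =
        ∑ x ∈ t, (Finset.univ.filter (fun ω : Fin n → Fin k => Φ ω = x)).card :=
      Finset.card_eq_sum_card_fiberwise (fun ω _ => hΦt ω)
    calc k ^ n = (Finset.univ : Finset (Fin n → Fin k)).card := by
          simp [Fintype.card_fun]
      _ = ∑ x ∈ t, (Finset.univ.filter (fun ω : Fin n → Fin k => Φ ω = x)).card := h4
      _ ≤ ∑ _x ∈ t, natC := Finset.sum_le_sum hfiber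
      _ = t.card * natC := by rw [Finset.sum_const, smul_eq_mul]
      _ = packingNum K δ * natC := by rw [htcard]
  -- convert to the real inequalities
  constructor
  · -- lower bound
    have hreal : ((k : ℝ)) ^ n ≤ (packingNum K δ : ℝ) * ((natC : ℝ) + 1) := by
      have : ((k ^ n : ℕ) : ℝ) ≤ ((packingNum K δ * natC : ℕ) : ℝ) := by exact_mod_cast hcount
      push_cast at this
      nlinarith [Nat.cast_nonneg (α := ℝ) (packingNum K δ)]
    have hrpow : δ ^ (-s) * c ^ s ≤ ((k : ℝ)) ^ n := by
      rw [hkn n]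
      calc δ ^ (-s) * c ^ s = (δ / c) ^ (-s) := by
            rw [Real.div_rpow hδ0.le hc0.le, Real.rpow_neg hc0.le s, div_eq_mul_inv, inv_inv]
        _ ≤ (c ^ n) ^ (-s) := Real.rpow_le_rpow_of_nonpos hcn_pos h3 (by linarith)
    rw [div_mul_eq_mul_div, div_le_iff₀ (by positivity)]
    push_cast
    calc c ^ s * δ ^ (-s) = δ ^ (-s) * c ^ s := by ring
      _ ≤ ((k : ℝ)) ^ n := hrpow
      _ ≤ (packingNum K δ : ℝ) * ((natC : ℝ) + 1) := hreal
  · -- upper bound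
    have hreal : (packingNum K δ : ℝ) ≤ ((k : ℝ)) ^ (n + m₀) := by exact_mod_cast hNub
    calc (packingNum K δ : ℝ) ≤ ((k : ℝ)) ^ (n + m₀) := hreal
      _ = (k : ℝ) ^ m₀ * (k : ℝ) ^ n := by ring
      _ ≤ (k : ℝ) ^ m₀ * δ ^ (-s) := by
          apply mul_le_mul_of_nonneg_left _ (by positivity)
          rw [hkn n]
          exact Real.rpow_le_rpow_of_nonpos hδ0 h2.le (by linarith)

end Aux

/-- under the OSC and a common factor `c`, the box-counting dimension of the
attractor exists and equals `-log k / log c`. -/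
theorem box_dim_common_ratio {d k : ℕ} (hk : 0 < k)
    (f : Fin k → EuclideanSpace ℝ (Fin d) → EuclideanSpace ℝ (Fin d))
    (c : ℝ) (hc : c ∈ Set.Ioo (0 : ℝ) 1)
    (hf : ∀ i, IsSimilarity (f i) c) (hosc : OSC f)
    (K : Set (EuclideanSpace ℝ (Fin d))) (hne : K.Nonempty) (hcpt : IsCompact K)
    (hK : K = ⋃ i, f i '' K) :
    Filter.Tendsto (fun δ : ℝ => Real.log (packingNum K δ) / (-Real.log δ))
      (𝓝[>] (0 : ℝ)) (𝓝 (-Real.log k / Real.log c)) := by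
  obtain ⟨C₁, C₂, hC₁, hC₂, hbound⟩ := packingNum_bounds hk f c hc hf hosc K hne hcpt hK
  set s : ℝ := Real.log k / (-Real.log c) with hs_def
  have hlogc : Real.log c < 0 := Real.log_neg hc.1 hc.2
  have htarget : -Real.log k / Real.log c = s := by
    rw [hs_def, div_neg, neg_div]
  rw [htarget]
  have hmem : Set.Ioo (0 : ℝ) c ∈ 𝓝[>] (0 : ℝ) := Ioo_mem_nhdsGT_of_mem ⟨le_refl 0, hc.1⟩
  have hlog : Tendsto (fun δ : ℝ => (-Real.log δ)⁻¹) (𝓝[>] (0 : ℝ)) (𝓝 0) := by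
    have h1 : Tendsto Real.log (𝓝[>] (0 : ℝ)) atBot := Real.tendsto_log_nhdsGT_zero
    have h2 : Tendsto (fun δ : ℝ => -Real.log δ) (𝓝[>] (0 : ℝ)) atTop :=
      Filter.tendsto_neg_atTop_iff.2 h1
    exact h2.inv_tendsto_atTop
  have hlower : Tendsto (fun δ : ℝ => s + Real.log C₁ * (-Real.log δ)⁻¹)
      (𝓝[>] (0 : ℝ)) (𝓝 s) := by
    have h := (hlog.const_mul (Real.log C₁)).const_add s
    simpa using h
  have hupper : Tendsto (fun δ : ℝ => s + Real.log C₂ * (-Real.log δ)⁻¹)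
      (𝓝[>] (0 : ℝ)) (𝓝 s) := by
    have h := (hlog.const_mul (Real.log C₂)).const_add s
    simpa using h
  apply tendsto_of_tendsto_of_tendsto_of_le_of_le' hlower hupper
  · -- lower squeeze
    filter_upwards [hmem] with δ hδ
    obtain ⟨h0, hcδ⟩ := hδ
    have hδ1 : δ < 1 := lt_trans hcδ hc.2
    have hld : 0 < -Real.log δ := by
      have := Real.log_neg h0 hδ1
      linarith
    obtain ⟨hlo, _⟩ := hbound δ h0 hcδ
    have hppos : (0 : ℝ) < C₁ * δ ^ (-s) := by positivity
    have hNpos : (0 : ℝ) < (packingNum K δ : ℝ) := lt_of_lt_of_le hppos hlo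
    have hlogN : Real.log C₁ + s * (-Real.log δ) ≤ Real.log (packingNum K δ) := by
      have h := Real.log_le_log hppos hlo
      rw [Real.log_mul (ne_of_gt hC₁) (by positivity), Real.log_rpow h0] at h
      have hr : (-s) * Real.log δ = s * (-Real.log δ) := by ring
      linarith [hr ▸ h]
    rw [le_div_iff₀ hld]
    have hexpand : (s + Real.log C₁ * (-Real.log δ)⁻¹) * (-Real.log δ) =
        s * (-Real.log δ) + Real.log C₁ := by
      rw [add_mul, mul_assoc, inv_mul_cancel₀ (ne_of_gt hld), mul_one]
    rw [hexpand]
    linarith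
  · -- upper squeeze
    filter_upwards [hmem] with δ hδ
    obtain ⟨h0, hcδ⟩ := hδ
    have hδ1 : δ < 1 := lt_trans hcδ hc.2
    have hld : 0 < -Real.log δ := by
      have := Real.log_neg h0 hδ1
      linarith
    obtain ⟨hlo, hup⟩ := hbound δ h0 hcδ
    have hppos : (0 : ℝ) < C₁ * δ ^ (-s) := by positivity
    have hNpos : (0 : ℝ) < (packingNum K δ : ℝ) := lt_of_lt_of_le hppos hlo
    have hlogN : Real.log (packingNum K δ) ≤ Real.log C₂ + s * (-Real.log δ) := by
      have h := Real.log_le_log hNpos hup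
      rw [Real.log_mul (ne_of_gt hC₂) (by positivity), Real.log_rpow h0] at h
      have hr : (-s) * Real.log δ = s * (-Real.log δ) := by ring
      linarith [hr ▸ h]
    rw [div_le_iff₀ hld]
    have hexpand : (s + Real.log C₂ * (-Real.log δ)⁻¹) * (-Real.log δ) =
        s * (-Real.log δ) + Real.log C₂ := by
      rw [add_mul, mul_assoc, inv_mul_cancel₀ (ne_of_gt hld), mul_one]
    rw [hexpand]
    linarith
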